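/- Let w₁, w₂ be closed words of length k+1 on (d-1)-cells such that N_{w₁}(τ) + N_{w₂}(τ) ≠ 1 for all d-cells τ and supp₁(w₁) ∩ supp₁(w₂) ≠ ∅ (they share a 1-cell). Then |supp₀(w₁ , w₂)| ≤ k + 2d − 2, where supp₀(w₁,w₂) is the union of the vertex supports of w₁ and w₂. -/

import Mathlib

open Finset

/-- If a set `s` of size ≥ m is contained in both `X` and `Y`, then `X \ Y` is small. -/
lemma aux_sdiff_le {s X Y : Finset ℕ} (hX : s ⊆ X) (hY : s ⊆ Y) :
    (X \ Y).card + s.card ≤ X.card := by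
  have h1 : X \ Y ⊆ X \ s := Finset.sdiff_subset_sdiff (le_refl X) hY
  have h2 := Finset.card_sdiff_add_card_eq_card hX
  have := Finset.card_le_card h1
  omega

/-- Chain covering bound: walking along a chain of cells, each new vertex beyond
`A ∪ c 0` is accounted by a cell distinct from `c 0` and from all members of `X`. -/
lemma chain_bound (c : ℕ → Finset ℕ) (X : Finset (Finset ℕ)) (A : Finset ℕ)
    (hA : ∀ τ ∈ X, τ ⊆ A) :
    ∀ n, 1 ≤ n → (∀ j, j + 1 < n → (c (j + 1) \ c j).card ≤ 1) →
      (A ∪ (Finset.range n).biUnion c).card ≤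
        (A ∪ c 0).card + (((Finset.range n).image c) \ insert (c 0) X).card := by
  intro n
  induction n with
  | zero => omega
  | succ m ih =>
    intro _ hstep
    rcases Nat.eq_zero_or_pos m with hm | hm
    · subst hm
      simp
    · have ih' := ih hm (fun j hj => hstep j (by omega))
      have hrange : Finset.range (m + 1) = insert m (Finset.range m) := Finset.range_add_one
      have hP : A ∪ (Finset.range (m + 1)).biUnion c
          = (A ∪ (Finset.range m).biUnion c) ∪ c m := by
        rw [hrange, Finset.biUnion_insert]
        rw [Finset.union_comm (c m), Finset.union_assoc]
      have himg : (Finset.range (m + 1)).image c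
          = insert (c m) ((Finset.range m).image c) := by
        rw [hrange, Finset.image_insert]
      set P := A ∪ (Finset.range m).biUnion c with hPdef
      by_cases hcm : c m ∈ insert (c 0) X ∨ c m ∈ (Finset.range m).image c
      · -- repeated cell: contributes nothing
        have hsub : c m ⊆ P := by
          rcases hcm with hcm | hcm
          · rcases Finset.mem_insert.mp hcm with h0 | hX'
            · rw [h0]
              intro x hx
              exact Finset.mem_union_right _ (Finset.mem_biUnion.mpr ⟨0, Finset.mem_range.mpr hm, hx⟩)
            · exact (hA _ hX').trans Finset.subset_union_left
          · obtain ⟨j, hj, hcj⟩ := Finset.mem_image.mp hcm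
            rw [← hcj]
            intro x hx
            exact Finset.mem_union_right _ (Finset.mem_biUnion.mpr ⟨j, hj, hx⟩)
      -- union card unchanged
        have h1 : A ∪ (Finset.range (m + 1)).biUnion c = P := by
          rw [hP, Finset.union_eq_left.mpr hsub]
        have h2 : (Finset.range (m + 1)).image c \ insert (c 0) X
            = (Finset.range m).image c \ insert (c 0) X := by
          rw [himg]
          rcases hcm with hcm | hcm
          · rw [Finset.insert_sdiff_of_mem _ hcm]
          · rw [Finset.insert_eq_self.mpr hcm]
        rw [h1, h2]
        exact ih'
      · push_neg at hcm
        obtain ⟨hcm1, hcm2⟩ := hcm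
        -- at most one new vertex
        have hprev : c (m - 1) ⊆ P := by
          intro x hx
          exact Finset.mem_union_right _
            (Finset.mem_biUnion.mpr ⟨m - 1, Finset.mem_range.mpr (by omega), hx⟩)
        have hstepm : (c m \ c (m - 1)).card ≤ 1 := by
          have := hstep (m - 1) (by omega)
          have hm1 : m - 1 + 1 = m := by omega
          rwa [hm1] at this
        have hnew : (c m \ P).card ≤ 1 := by
          refine le_trans (Finset.card_le_card ?_) hstepm
          exact Finset.sdiff_subset_sdiff (le_refl _) hprev
        have hcard1 : (A ∪ (Finset.range (m + 1)).biUnion c).card ≤ P.card + 1 := by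
          rw [hP]
          have : P ∪ c m = P ∪ (c m \ P) := (Finset.union_sdiff_self_eq_union).symm
          rw [this, Finset.card_union_of_disjoint Finset.disjoint_sdiff]
          omega
        have hcard2 : ((Finset.range (m + 1)).image c \ insert (c 0) X).card
            = ((Finset.range m).image c \ insert (c 0) X).card + 1 := by
          rw [himg, Finset.insert_sdiff_of_notMem _ hcm1,
            Finset.card_insert_of_notMem (fun h => hcm2 (Finset.mem_sdiff.mp h).1)]
        omega

theorem stmt12 (d k : ℕ) (hd : 2 ≤ d) (hk : 2 ≤ k)
    (σ₁ σ₂ : ℕ → Finset ℕ)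
    (hcard₁ : ∀ i ≤ k, (σ₁ i).card = d) (hcard₂ : ∀ i ≤ k, (σ₂ i).card = d)
    (hcell₁ : ∀ i < k, (σ₁ i ∪ σ₁ (i + 1)).card = d + 1)
    (hcell₂ : ∀ i < k, (σ₂ i ∪ σ₂ (i + 1)).card = d + 1)
    (hclosed₁ : σ₁ k = σ₁ 0) (hclosed₂ : σ₂ k = σ₂ 0)
    (hN : ∀ τ : Finset ℕ,
      ((Finset.range k).filter (fun i => σ₁ i ∪ σ₁ (i + 1) = τ)).card +
        ((Finset.range k).filter (fun i => σ₂ i ∪ σ₂ (i + 1) = τ)).card ≠ 1)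
    (hshare :
      (((Finset.range k).biUnion (fun i => (σ₁ i ∪ σ₁ (i + 1)).powersetCard 2)) ∩
        ((Finset.range k).biUnion (fun i => (σ₂ i ∪ σ₂ (i + 1)).powersetCard 2))).Nonempty) :
    ((Finset.range (k + 1)).biUnion σ₁ ∪ (Finset.range (k + 1)).biUnion σ₂).card ≤
      k + 2 * d - 2 := by
  classical
  set cell₁ : ℕ → Finset ℕ := fun i => σ₁ i ∪ σ₁ (i + 1) with hcell1def
  set cell₂ : ℕ → Finset ℕ := fun i => σ₂ i ∪ σ₂ (i + 1) with hcell2def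
  -- unpack the shared 1-cell
  obtain ⟨p, hp⟩ := hshare
  rw [Finset.mem_inter] at hp
  obtain ⟨hp1, hp2⟩ := hp
  obtain ⟨i₀, hi₀, hpi₀⟩ := Finset.mem_biUnion.mp hp1
  obtain ⟨j₀, hj₀, hpj₀⟩ := Finset.mem_biUnion.mp hp2
  rw [Finset.mem_range] at hi₀ hj₀
  rw [Finset.mem_powersetCard] at hpi₀ hpj₀
  -- shifted word 2
  set c : ℕ → Finset ℕ := fun j => cell₂ ((j + j₀) % k) with hcdef
  have hsurj : ∀ i < k, ∃ j < k, (j + j₀) % k = i := by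
    intro i hi
    refine ⟨(i + k - j₀) % k, Nat.mod_lt _ (by omega), ?_⟩
    rw [Nat.mod_add_mod]
    have h1 : i + k - j₀ + j₀ = i + k := by omega
    rw [h1, Nat.add_mod_right, Nat.mod_eq_of_lt hi]
  set S₁ : Finset (Finset ℕ) := (Finset.range k).image cell₁ with hS1def
  set S₂ : Finset (Finset ℕ) := (Finset.range k).image cell₂ with hS2def
  set A : Finset ℕ := (Finset.range k).biUnion cell₁ with hAdef
  -- |S₁ ∪ S₂| ≤ k
  have hsk : (S₁ ∪ S₂).card ≤ k := by
    have hfib₁ : (Finset.range k).card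
        = ∑ τ ∈ S₁ ∪ S₂, ((Finset.range k).filter (fun i => cell₁ i = τ)).card :=
      Finset.card_eq_sum_card_fiberwise (fun i hi =>
        Finset.mem_union_left _ (Finset.mem_image_of_mem _ hi))
    have hfib₂ : (Finset.range k).card
        = ∑ τ ∈ S₁ ∪ S₂, ((Finset.range k).filter (fun i => cell₂ i = τ)).card :=
      Finset.card_eq_sum_card_fiberwise (fun i hi =>
        Finset.mem_union_right _ (Finset.mem_image_of_mem _ hi))
    have hge : ∀ τ ∈ S₁ ∪ S₂,
        2 ≤ ((Finset.range k).filter (fun i => cell₁ i = τ)).card +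
          ((Finset.range k).filter (fun i => cell₂ i = τ)).card := by
      intro τ hτ
      have hne : ((Finset.range k).filter (fun i => cell₁ i = τ)).card +
          ((Finset.range k).filter (fun i => cell₂ i = τ)).card ≠ 1 := hN τ
      have hpos : 1 ≤ ((Finset.range k).filter (fun i => cell₁ i = τ)).card +
          ((Finset.range k).filter (fun i => cell₂ i = τ)).card := by
        rcases Finset.mem_union.mp hτ with h | h
        · obtain ⟨i, hi, hiτ⟩ := Finset.mem_image.mp h
          have : i ∈ (Finset.range k).filter (fun i => cell₁ i = τ) :=
            Finset.mem_filter.mpr ⟨hi, hiτ⟩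
          have := Finset.card_pos.mpr ⟨i, this⟩
          omega
        · obtain ⟨i, hi, hiτ⟩ := Finset.mem_image.mp h
          have : i ∈ (Finset.range k).filter (fun i => cell₂ i = τ) :=
            Finset.mem_filter.mpr ⟨hi, hiτ⟩
          have := Finset.card_pos.mpr ⟨i, this⟩
          omega
      omega
    have hsum : 2 * (S₁ ∪ S₂).card ≤ 2 * k := by
      calc 2 * (S₁ ∪ S₂).card = ∑ _τ ∈ S₁ ∪ S₂, 2 := by
            rw [Finset.sum_const, smul_eq_mul, mul_comm]
        _ ≤ ∑ τ ∈ S₁ ∪ S₂, (((Finset.range k).filter (fun i => cell₁ i = τ)).card +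
              ((Finset.range k).filter (fun i => cell₂ i = τ)).card) :=
            Finset.sum_le_sum hge
        _ = 2 * k := by
            rw [Finset.sum_add_distrib, ← hfib₁, ← hfib₂, Finset.card_range]; ring
    omega
  -- word 1 bound
  have hchain₁ : ∀ i, i + 1 < k → (cell₁ (i + 1) \ cell₁ i).card ≤ 1 := by
    intro i hi
    have h1 : σ₁ (i + 1) ⊆ cell₁ (i + 1) := Finset.subset_union_left
    have h2 : σ₁ (i + 1) ⊆ cell₁ i := Finset.subset_union_right
    have := aux_sdiff_le h1 h2
    rw [hcard₁ (i + 1) (by omega), hcell₁ (i + 1) hi] at this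
    omega
  have hA_card : A.card + 1 ≤ d + 1 + S₁.card := by
    have := chain_bound cell₁ ∅ ∅ (by simp) k (by omega) hchain₁
    simp only [Finset.empty_union, insert_empty_eq] at this
    rw [← hS1def, ← hAdef] at this
    have hc0S : cell₁ 0 ∈ S₁ := Finset.mem_image_of_mem _ (Finset.mem_range.mpr (by omega))
    have hsd : (S₁ \ {cell₁ 0}).card + ({cell₁ 0} : Finset (Finset ℕ)).card = S₁.card :=
      Finset.card_sdiff_add_card_eq_card (Finset.singleton_subset_iff.mpr hc0S)
    rw [Finset.card_singleton] at hsd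
    have hc0card : (cell₁ 0).card = d + 1 := hcell₁ 0 (by omega)
    omega
  -- chain property of shifted word 2
  have hchain₂ : ∀ j, j + 1 < k → (c (j + 1) \ c j).card ≤ 1 := by
    intro j hj
    set a := (j + j₀) % k with hadef
    have ha : a < k := Nat.mod_lt _ (by omega)
    have hb : (j + 1 + j₀) % k = (a + 1) % k := by
      rw [hadef, Nat.mod_add_mod]
      congr 1
      omega
    have hbk : (a + 1) % k < k := Nat.mod_lt _ (by omega)
    have h1 : σ₂ ((a + 1) % k) ⊆ c (j + 1) := by
      show σ₂ ((a + 1) % k) ⊆ cell₂ ((j + 1 + j₀) % k)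
      rw [hb]
      exact Finset.subset_union_left
    have h2 : σ₂ ((a + 1) % k) ⊆ c j := by
      show σ₂ ((a + 1) % k) ⊆ cell₂ a
      rcases Nat.lt_or_ge (a + 1) k with h | h
      · rw [Nat.mod_eq_of_lt h]
        exact Finset.subset_union_right
      · have hak : a + 1 = k := by omega
        have : (a + 1) % k = 0 := by rw [hak, Nat.mod_self]
        rw [this]
        rw [← hclosed₂, ← hak]
        exact Finset.subset_union_right
    have hccard : (c (j + 1)).card = d + 1 := by
      show (cell₂ ((j + 1 + j₀) % k)).card = d + 1
      rw [hb]
      exact hcell₂ _ hbk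
    have := aux_sdiff_le h1 h2
    rw [hcard₂ _ (le_of_lt hbk), hccard] at this
    omega
  -- main chain bound
  have hmain := chain_bound c S₁ A
    (by
      intro τ hτ
      obtain ⟨i, hi, hiτ⟩ := Finset.mem_image.mp hτ
      rw [← hiτ]
      intro x hx
      exact Finset.mem_biUnion.mpr ⟨i, hi, hx⟩)
    k (by omega) hchain₂
  -- image of shifted word equals S₂
  have himg : (Finset.range k).image c = S₂ := by
    apply Finset.Subset.antisymm
    · intro τ hτ
      obtain ⟨j, hj, hjτ⟩ := Finset.mem_image.mp hτ
      exact Finset.mem_image.mpr ⟨(j + j₀) % k, Finset.mem_range.mpr (Nat.mod_lt _ (by omega)), hjτ⟩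
    · intro τ hτ
      obtain ⟨i, hi, hiτ⟩ := Finset.mem_image.mp hτ
      obtain ⟨j, hjk, hji⟩ := hsurj i (Finset.mem_range.mp hi)
      refine Finset.mem_image.mpr ⟨j, Finset.mem_range.mpr hjk, ?_⟩
      show cell₂ ((j + j₀) % k) = τ
      rw [hji, hiτ]
    -- the target support is contained in A ∪ ⋃ c
  have hsupp : (Finset.range (k + 1)).biUnion σ₁ ∪ (Finset.range (k + 1)).biUnion σ₂
      ⊆ A ∪ (Finset.range k).biUnion c := by
    intro x hx
    rcases Finset.mem_union.mp hx with hx | hx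
    · obtain ⟨i, hi, hxi⟩ := Finset.mem_biUnion.mp hx
      rw [Finset.mem_range] at hi
      apply Finset.mem_union_left
      rcases Nat.lt_or_ge i k with h | h
      · exact Finset.mem_biUnion.mpr ⟨i, Finset.mem_range.mpr h,
          Finset.mem_union_left _ hxi⟩
      · have : i = k := by omega
        rw [this, hclosed₁] at hxi
        exact Finset.mem_biUnion.mpr ⟨0, Finset.mem_range.mpr (by omega),
          Finset.mem_union_left _ hxi⟩
    · obtain ⟨i, hi, hxi⟩ := Finset.mem_biUnion.mp hx
      rw [Finset.mem_range] at hi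
      apply Finset.mem_union_right
      have hxcell : ∃ i' < k, x ∈ cell₂ i' := by
        rcases Nat.lt_or_ge i k with h | h
        · exact ⟨i, h, Finset.mem_union_left _ hxi⟩
        · have : i = k := by omega
          rw [this, hclosed₂] at hxi
          exact ⟨0, by omega, Finset.mem_union_left _ hxi⟩
      obtain ⟨i', hi', hxi'⟩ := hxcell
      obtain ⟨j, hjk, hji⟩ := hsurj i' hi'
      refine Finset.mem_biUnion.mpr ⟨j, Finset.mem_range.mpr hjk, ?_⟩
      show x ∈ cell₂ ((j + j₀) % k)
      rw [hji]; exact hxi'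
  have htot : ((Finset.range (k + 1)).biUnion σ₁ ∪ (Finset.range (k + 1)).biUnion σ₂).card
      ≤ (A ∪ (Finset.range k).biUnion c).card := Finset.card_le_card hsupp
  -- facts about c 0
  have hc0 : c 0 = cell₂ j₀ := by
    show cell₂ ((0 + j₀) % k) = cell₂ j₀
    rw [Nat.zero_add, Nat.mod_eq_of_lt hj₀]
  have hc0S2 : c 0 ∈ S₂ := by
    rw [hc0]; exact Finset.mem_image_of_mem _ (Finset.mem_range.mpr hj₀)
  have hc0card : (c 0).card = d + 1 := by rw [hc0]; exact hcell₂ j₀ hj₀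
  have hpA : p ⊆ A := by
    intro x hx
    exact Finset.mem_biUnion.mpr ⟨i₀, Finset.mem_range.mpr hi₀, hpi₀.1 hx⟩
  have hpc0 : p ⊆ c 0 := by rw [hc0]; exact hpj₀.1
  have hS1sub : S₁ ⊆ S₁ ∪ S₂ := Finset.subset_union_left
  rw [himg] at hmain
  by_cases hc0S1 : c 0 ∈ S₁
  · -- c 0 already a cell of word 1
    have hc0A : c 0 ⊆ A := by
      obtain ⟨i, hi, hiτ⟩ := Finset.mem_image.mp hc0S1
      rw [← hiτ]
      intro x hx
      exact Finset.mem_biUnion.mpr ⟨i, hi, hx⟩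
    have hAc0 : A ∪ c 0 = A := Finset.union_eq_left.mpr hc0A
    rw [hAc0] at hmain
    have hins : insert (c 0) S₁ = S₁ := Finset.insert_eq_self.mpr hc0S1
    rw [hins] at hmain
    have hsd : S₂ \ S₁ ⊆ (S₁ ∪ S₂) \ S₁ :=
      Finset.sdiff_subset_sdiff Finset.subset_union_right (le_refl _)
    have hsd2 : ((S₁ ∪ S₂) \ S₁).card + S₁.card = (S₁ ∪ S₂).card :=
      Finset.card_sdiff_add_card_eq_card hS1sub
    have := Finset.card_le_card hsd
    omega
  · -- c 0 is a new cell
    have hT : insert (c 0) S₁ ⊆ S₁ ∪ S₂ := by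
      intro τ hτ
      rcases Finset.mem_insert.mp hτ with h | h
      · rw [h]; exact Finset.mem_union_right _ hc0S2
      · exact Finset.mem_union_left _ h
    have hTcard : (insert (c 0) S₁).card = S₁.card + 1 :=
      Finset.card_insert_of_notMem hc0S1
    have hsd : S₂ \ insert (c 0) S₁ ⊆ (S₁ ∪ S₂) \ insert (c 0) S₁ :=
      Finset.sdiff_subset_sdiff Finset.subset_union_right (le_refl _)
    have hsd2 : ((S₁ ∪ S₂) \ insert (c 0) S₁).card + (insert (c 0) S₁).card
        = (S₁ ∪ S₂).card := Finset.card_sdiff_add_card_eq_card hT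
    have hsd3 := Finset.card_le_card hsd
    -- |A ∪ c 0| ≤ |A| + d - 1
    have hAc0 : (A ∪ c 0).card + 2 ≤ A.card + d + 1 := by
      have heq : A ∪ c 0 = A ∪ (c 0 \ A) := (Finset.union_sdiff_self_eq_union).symm
      have hdisj : (A ∪ c 0).card = A.card + (c 0 \ A).card := by
        rw [heq, Finset.card_union_of_disjoint Finset.disjoint_sdiff]
      have := aux_sdiff_le hpc0 hpA
      rw [hpj₀.2, hc0card] at this
      omega
    omega
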